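/- Let x_1, ..., x_{m+1} be sampled i.i.d. from a distribution D over R^d. Then the probability that x_{m+1} is not in the linear span of x_1,...,x_m is at most d/(m+1). -/

import Mathlib

open MeasureTheory
open scoped ENNReal


lemma aux_mem_span_finset {ι E : Type*} [AddCommGroup E] [Module ℝ E]
    (t : Finset ι) (x : ι → E) (w : E) :
    w ∈ Submodule.span ℝ (x '' ↑t) ↔ ∃ c : ι → ℝ, ∑ i ∈ t, c i • x i = w := by
  classical
  constructor
  · intro hw
    induction hw using Submodule.span_induction with
    | mem v hv =>
      obtain ⟨i, hi, rfl⟩ := hv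
      refine ⟨fun k => if k = i then 1 else 0, ?_⟩
      rw [Finset.sum_eq_single i]
      · simp
      · intro b _ hb; simp [hb]
      · intro h; exact absurd hi h
    | zero => exact ⟨0, by simp⟩
    | add u v _ _ hu hv =>
      obtain ⟨c, hc⟩ := hu; obtain ⟨c', hc'⟩ := hv
      exact ⟨c + c', by simp [add_smul, Finset.sum_add_distrib, hc, hc']⟩
    | smul a u _ hu =>
      obtain ⟨c, hc⟩ := hu
      exact ⟨a • c, by rw [← hc, Finset.smul_sum]; simp [smul_smul]⟩
  · rintro ⟨c, rfl⟩
    exact Submodule.sum_mem _ fun i hi =>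
      Submodule.smul_mem _ _ (Submodule.subset_span ⟨i, hi, rfl⟩)

lemma aux_measurable_span (n d : ℕ) (t : Finset (Fin n)) (j : Fin n) :
    MeasurableSet {x : Fin n → Fin d → ℝ | x j ∈ Submodule.span ℝ (x '' ↑t)} := by
  classical
  have hchar : ∀ x : Fin n → Fin d → ℝ,
      x j ∈ Submodule.span ℝ (x '' ↑t) ↔
      ∀ k : ℕ, ∃ c : Fin n → ℚ,
        ‖x j - ∑ i ∈ t, (c i : ℝ) • x i‖ < 1 / ((k : ℝ) + 1) := by
    intro x
    constructor
    · intro hx k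
      obtain ⟨c, hc⟩ := (aux_mem_span_finset t x (x j)).1 hx
      set g : (Fin n → ℝ) → (Fin d → ℝ) := fun c => ∑ i ∈ t, c i • x i with hg
      have hgc : Continuous g := by
        apply continuous_finset_sum
        intro i _
        exact (continuous_apply i).smul continuous_const
      have hd : Dense (Set.range (fun q : Fin n → ℚ => fun i => (q i : ℝ))) := by
        have heq : Set.range (fun q : Fin n → ℚ => fun i => (q i : ℝ))
            = Set.pi Set.univ (fun _ => Set.range ((↑) : ℚ → ℝ)) := by
          ext c
          simp only [Set.mem_range, Set.mem_pi, Set.mem_univ, forall_true_left, funext_iff]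
          exact ⟨fun ⟨q, hq⟩ i => ⟨q i, hq i⟩, fun h => by
            choose q hq using h; exact ⟨q, hq⟩⟩
        rw [heq]
        exact dense_pi Set.univ fun i _ => Rat.denseRange_cast
      have hmem : g c ∈ closure
          (Set.range (g ∘ fun q : Fin n → ℚ => fun i => (q i : ℝ))) := by
        rw [Set.range_comp]
        exact mem_closure_image hgc.continuousAt (hd c)
      rw [Metric.mem_closure_iff] at hmem
      obtain ⟨y, ⟨q, rfl⟩, hy⟩ := hmem (1 / ((k : ℝ) + 1)) (by positivity)
      refine ⟨q, ?_⟩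
      rw [← hc]
      simpa [dist_eq_norm, Function.comp] using hy
    · intro h
      have hcl : IsClosed
          ((Submodule.span ℝ (x '' ↑t) : Submodule ℝ (Fin d → ℝ)) : Set (Fin d → ℝ)) :=
        Submodule.closed_of_finiteDimensional _
      rw [← SetLike.mem_coe, ← hcl.closure_eq, Metric.mem_closure_iff]
      intro ε hε
      obtain ⟨k, hk⟩ := exists_nat_one_div_lt hε
      obtain ⟨c, hc⟩ := h k
      refine ⟨∑ i ∈ t, (c i : ℝ) • x i,
        (aux_mem_span_finset t x _).2 ⟨fun i => (c i : ℝ), rfl⟩, ?_⟩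
      rw [dist_eq_norm]
      exact lt_trans hc hk
  have hset : {x : Fin n → Fin d → ℝ | x j ∈ Submodule.span ℝ (x '' ↑t)}
      = ⋂ k : ℕ, ⋃ c : Fin n → ℚ,
        {x : Fin n → Fin d → ℝ | ‖x j - ∑ i ∈ t, (c i : ℝ) • x i‖ < 1 / ((k : ℝ) + 1)} := by
    ext x
    simp only [Set.mem_setOf_eq, Set.mem_iInter, Set.mem_iUnion, hchar x]
  rw [hset]
  refine MeasurableSet.iInter fun k => MeasurableSet.iUnion fun c => ?_
  have hcont : Continuous fun x : Fin n → Fin d → ℝ =>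
      ‖x j - ∑ i ∈ t, (c i : ℝ) • x i‖ := by
    apply Continuous.norm
    apply Continuous.sub (continuous_apply j)
    exact continuous_finset_sum _ fun i _ => by fun_prop
  exact measurableSet_lt hcont.measurable measurable_const


lemma aux_linearIndependent {n : ℕ} {E : Type*} [AddCommGroup E] [Module ℝ E]
    (x : Fin n → E) (T : Finset (Fin n))
    (hT : ∀ j ∈ T, x j ∉ Submodule.span ℝ (x '' ↑(Finset.Iio j))) :
    LinearIndependent ℝ (fun i : (T : Set (Fin n)) => x i) := by
  classical
  induction T using Finset.induction_on_max with
  | empty => rw [Finset.coe_empty]; exact linearIndependent_empty_type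
  | insert a s ha ih =>
    have has : a ∉ (s : Set (Fin n)) := fun h => lt_irrefl a (ha a h)
    rw [Finset.coe_insert]; change LinearIndepOn ℝ x _; rw [linearIndepOn_insert has]
    constructor
    · exact ih fun j hj => hT j (Finset.mem_insert_of_mem hj)
    · intro hmem
      apply hT a (Finset.mem_insert_self a s)
      refine Submodule.span_mono ?_ hmem
      rintro v ⟨i, hi, rfl⟩
      exact ⟨i, by simpa using ha i hi, rfl⟩

lemma aux_card_le {n d : ℕ} (x : Fin n → Fin d → ℝ) (T : Finset (Fin n))
    (hT : ∀ j ∈ T, x j ∉ Submodule.span ℝ (x '' ↑(Finset.Iio j))) :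
    T.card ≤ d := by
  have h := (aux_linearIndependent x T hT).fintype_card_le_finrank
  rw [Module.finrank_fin_fun ℝ] at h
  simpa using h

lemma aux_measurePreserving {n d : ℕ} (D : Measure (Fin d → ℝ)) [SigmaFinite D]
    (σ : Equiv.Perm (Fin n)) :
    MeasurePreserving (fun x : Fin n → Fin d → ℝ => x ∘ σ)
      (Measure.pi fun _ => D) (Measure.pi fun _ => D) := by
  have hmeas : Measurable (fun x : Fin n → Fin d → ℝ => x ∘ σ) :=
    measurable_pi_lambda _ fun i => measurable_pi_apply (σ i)
  refine ⟨hmeas, ?_⟩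
  refine (Measure.pi_eq (μ := fun _ : Fin n => D) fun s hs => ?_).symm
  rw [Measure.map_apply hmeas (MeasurableSet.univ_pi hs)]
  have hpre : (fun x : Fin n → Fin d → ℝ => x ∘ σ) ⁻¹' (Set.pi Set.univ s)
      = Set.pi Set.univ (fun i => s (σ.symm i)) := by
    ext x
    simp only [Set.mem_preimage, Set.mem_pi, Set.mem_univ, forall_true_left,
      Function.comp_apply]
    constructor
    · intro h i; simpa using h (σ.symm i)
    · intro h i; simpa using h (σ i)
  rw [hpre, Measure.pi_pi]
  exact Equiv.prod_comp σ.symm fun i => D (s i)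


theorem prob_last_not_in_span_le (d m : ℕ) (D : Measure (Fin d → ℝ))
    [IsProbabilityMeasure D] :
    (Measure.pi fun _ : Fin (m + 1) => D)
      {x : Fin (m + 1) → Fin d → ℝ |
        x (Fin.last m) ∉ Submodule.span ℝ (x '' {i : Fin (m + 1) | i < Fin.last m})}
      ≤ (d : ℝ≥0∞) / (m + 1) := by
  classical
  set μ := Measure.pi fun _ : Fin (m + 1) => D with hμ
  set A : Fin (m + 1) → Set (Fin (m + 1) → Fin d → ℝ) :=
    fun j => {x | x j ∉ Submodule.span ℝ (x '' ↑(Finset.Iio j))} with hA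
  set B : Fin (m + 1) → Set (Fin (m + 1) → Fin d → ℝ) :=
    fun j => {x | x j ∉ Submodule.span ℝ (x '' ↑({j}ᶜ : Finset (Fin (m + 1))))} with hB
  have hAm : ∀ j, MeasurableSet (A j) := fun j =>
    (aux_measurable_span (m + 1) d (Finset.Iio j) j).compl
  have hBm : ∀ j, MeasurableSet (B j) := fun j =>
    (aux_measurable_span (m + 1) d ({j}ᶜ) j).compl
  have htarget : {x : Fin (m + 1) → Fin d → ℝ |
      x (Fin.last m) ∉ Submodule.span ℝ (x '' {i : Fin (m + 1) | i < Fin.last m})}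
      = B (Fin.last m) := by
    have hs : {i : Fin (m + 1) | i < Fin.last m}
        = ↑(({Fin.last m}ᶜ : Finset (Fin (m + 1)))) := by
      ext i
      simp [Fin.lt_last_iff_ne_last]
    rw [hB, hs]
  rw [htarget]
  -- exchangeability: μ (B last) = μ (B j)
  have hswap : ∀ j : Fin (m + 1), μ (B (Fin.last m)) = μ (B j) := by
    intro j
    set σ := Equiv.swap j (Fin.last m) with hσ
    have hmp := aux_measurePreserving (n := m + 1) D σ
    have hpre : (fun x : Fin (m + 1) → Fin d → ℝ => x ∘ σ) ⁻¹' (B j)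
        = B (Fin.last m) := by
      ext x
      have him : (x ∘ σ) '' ↑(({j}ᶜ : Finset (Fin (m + 1))))
          = x '' ↑(({Fin.last m}ᶜ : Finset (Fin (m + 1)))) := by
        rw [Set.image_comp]
        rw [Finset.coe_compl, Finset.coe_singleton,
          Set.image_compl_eq σ.bijective, Set.image_singleton, hσ,
          Equiv.swap_apply_left, ← Finset.coe_singleton, ← Finset.coe_compl]
      have h1 : (x ∘ σ) j = x (Fin.last m) := by simp [hσ]
      show (x ∘ σ) j ∉ Submodule.span ℝ ((x ∘ σ) '' ↑(({j}ᶜ : Finset (Fin (m + 1)))))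
        ↔ x (Fin.last m) ∉ Submodule.span ℝ (x '' ↑(({Fin.last m}ᶜ : Finset (Fin (m + 1)))))
      rw [him, h1]
    rw [← hpre, hmp.measure_preimage (hBm j).nullMeasurableSet]
  have hBA : ∀ j, B j ⊆ A j := by
    intro j x hx hmem
    apply hx
    refine Submodule.span_mono (Set.image_mono (f := x) ?_) hmem
    intro i hi
    simp only [Finset.coe_Iio, Set.mem_Iio] at hi
    simp [Finset.coe_compl, ne_of_lt hi]
  have hle : ∀ j, μ (B (Fin.last m)) ≤ μ (A j) := fun j =>
    (hswap j).le.trans (measure_mono (hBA j))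
  -- sum of indicators bound
  have hsum : ∑ j : Fin (m + 1), μ (A j) ≤ (d : ℝ≥0∞) := by
    have h1 : ∀ x : Fin (m + 1) → Fin d → ℝ,
        ∑ j : Fin (m + 1), (A j).indicator (1 : (Fin (m + 1) → Fin d → ℝ) → ℝ≥0∞) x ≤ (d : ℝ≥0∞) := by
      intro x
      have heq : ∑ j : Fin (m + 1), (A j).indicator (1 : (Fin (m + 1) → Fin d → ℝ) → ℝ≥0∞) x
          = ((Finset.univ.filter fun j => x ∈ A j).card : ℝ≥0∞) := by
        rw [← Finset.sum_boole]
        refine Finset.sum_congr rfl fun j _ => ?_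
        by_cases h : x ∈ A j <;> simp [Set.indicator, h]
      rw [heq]
      have hcard : (Finset.univ.filter fun j => x ∈ A j).card ≤ d := by
        apply aux_card_le x
        intro j hj
        exact (Finset.mem_filter.1 hj).2
      exact_mod_cast hcard
    calc ∑ j : Fin (m + 1), μ (A j)
        = ∫⁻ x, ∑ j : Fin (m + 1), (A j).indicator (1 : (Fin (m + 1) → Fin d → ℝ) → ℝ≥0∞) x ∂μ := by
          rw [lintegral_finset_sum _ fun j _ => measurable_one.indicator (hAm j)]
          refine Finset.sum_congr rfl fun j _ => ?_
          rw [lintegral_indicator_one (hAm j)]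
      _ ≤ ∫⁻ _, (d : ℝ≥0∞) ∂μ := lintegral_mono h1
      _ = (d : ℝ≥0∞) := by simp [hμ]
  -- combine
  have hmain : ((m : ℝ≥0∞) + 1) * μ (B (Fin.last m)) ≤ (d : ℝ≥0∞) := by
    calc ((m : ℝ≥0∞) + 1) * μ (B (Fin.last m))
        = ∑ _j : Fin (m + 1), μ (B (Fin.last m)) := by
          rw [Finset.sum_const, Finset.card_univ, Fintype.card_fin, nsmul_eq_mul]
          push_cast
          ring
      _ ≤ ∑ j : Fin (m + 1), μ (A j) := Finset.sum_le_sum fun j _ => hle j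
      _ ≤ (d : ℝ≥0∞) := hsum
  rw [ENNReal.le_div_iff_mul_le (Or.inl (lt_of_lt_of_le one_pos le_add_self).ne') (Or.inl (by finiteness))]
  rw [mul_comm]
  exact hmain
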